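/- Let n > 2, let V = 𝔽₂ⁿ, let g ∈ Sym(V), and let W ≤ V be a subspace such that σ_W = T ∩ T^g. If dim(W) = n − 2, then T^g is a (proper) subgroup of the affine group AGL(V). -/

import Mathlib

open Equiv

/-- `V n` is the `n`-dimensional vector space over the field with two elements. -/
abbrev V (n : ℕ) : Type := Fin n → ZMod 2

/-- The subgroup `σ_W` of `Sym(V)` consisting of the translations `x ↦ x + w` with `w ∈ W`. -/
def sigmaSub (n : ℕ) (W : Submodule (ZMod 2) (V n)) : Subgroup (Equiv.Perm (V n)) where
  carrier := {g | ∃ v ∈ W, ∀ x, g x = x + v}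
  one_mem' := ⟨0, W.zero_mem, fun x => by simp⟩
  mul_mem' := by
    rintro a b ⟨v, hv, ha⟩ ⟨w, hw, hb⟩
    exact ⟨w + v, W.add_mem hw hv, fun x => by
      simp [Equiv.Perm.mul_apply, ha, hb, add_assoc]⟩
  inv_mem' := by
    rintro a ⟨v, hv, ha⟩
    refine ⟨-v, W.neg_mem hv, fun x => a.injective ?_⟩
    rw [Equiv.Perm.inv_def, Equiv.apply_symm_apply, ha]
    abel

/-- The translation group `T`, i.e. the image of the right regular representation
of `(V, +)` in `Sym(V)`. -/
def T (n : ℕ) : Subgroup (Equiv.Perm (V n)) := sigmaSub n ⊤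

/-- The affine group `AGL(V) = T ⋊ GL(V)`, consisting of the invertible affine
transformations `x ↦ L x + v` of `V`. -/
def AGL (n : ℕ) : Subgroup (Equiv.Perm (V n)) where
  carrier := {g | ∃ (L : V n ≃ₗ[ZMod 2] V n) (v : V n), ∀ x, g x = L x + v}
  one_mem' := ⟨LinearEquiv.refl _ _, 0, fun x => by simp⟩
  mul_mem' := by
    rintro a b ⟨L, v, ha⟩ ⟨M, w, hb⟩
    exact ⟨M ≪≫ₗ L, L w + v, fun x => by
      simp [Equiv.Perm.mul_apply, ha, hb, map_add, add_assoc]⟩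
  inv_mem' := by
    rintro a ⟨L, v, ha⟩
    refine ⟨L.symm, -(L.symm v), fun x => a.injective ?_⟩
    rw [Equiv.Perm.inv_def, Equiv.apply_symm_apply, ha, map_add, map_neg, LinearEquiv.apply_symm_apply,
      LinearEquiv.apply_symm_apply]
    abel

/-- The conjugate subgroup `H^g = g⁻¹ H g`. -/
def conjSub {G : Type*} [Group G] (H : Subgroup G) (g : G) : Subgroup G :=
  H.map (MulAut.conj g⁻¹).toMonoidHom

/-- A subgroup of `Sym(V)` is an elementary abelian regular subgroup if it is an
elementary abelian 2-group (every element squares to the identity) acting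
regularly (sharply transitively) on `V`. -/
def IsElemAbelianRegular (n : ℕ) (R : Subgroup (Equiv.Perm (V n))) : Prop :=
  (∀ r ∈ R, r * r = 1) ∧ ∀ x y : V n, ∃! r : R, (r : Equiv.Perm (V n)) x = y

/-- `A` is a normal subgroup of `B` (as subgroups of a common ambient group). -/
def NormalIn {G : Type*} [Group G] (A B : Subgroup G) : Prop :=
  A ≤ B ∧ ∀ b ∈ B, ∀ a ∈ A, b * a * b⁻¹ ∈ A

/-- `S` is a Sylow `2`-subgroup of `K` (as subgroups of a common ambient group):
`S` is a `2`-subgroup of `K` maximal among the `2`-subgroups of `K`. -/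
def IsSylow2Of {G : Type*} [Group G] (S K : Subgroup G) : Prop :=
  S ≤ K ∧ IsPGroup 2 S ∧ ∀ Q : Subgroup G, Q ≤ K → IsPGroup 2 Q → S ≤ Q → Q = S

/- ### Auxiliary lemmas -/

lemma char2_add_self' {M : Type*} [AddCommGroup M] [Module (ZMod 2) M] (x : M) : x + x = 0 := by
  have h := two_smul (ZMod 2) x
  rw [show (2 : ZMod 2) = 0 by decide, zero_smul] at h
  exact h.symm

lemma char2_cancel' {M : Type*} [AddCommGroup M] [Module (ZMod 2) M] (a b : M) :
    a + (a + b) = b := by rw [← add_assoc, char2_add_self', zero_add]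

lemma char2_eq_iff' {M : Type*} [AddCommGroup M] [Module (ZMod 2) M] (a b : M) :
    a = b ↔ a + b = 0 := by
  constructor
  · rintro rfl; exact char2_add_self' a
  · intro h
    have := congrArg (· + b) h
    simpa [add_assoc, char2_add_self'] using this

/-- membership in the conjugate of the translation group -/
lemma mem_conjT_iff {n : ℕ} (g r : Equiv.Perm (V n)) :
    r ∈ conjSub (T n) g ↔ ∃ v : V n, ∀ x, r x = g⁻¹ (g x + v) := by
  constructor
  · rintro ⟨t, ⟨v, -, ht⟩, rfl⟩
    exact ⟨v, fun x => by
      simp [MulAut.conj_apply, Equiv.Perm.mul_apply, ht]⟩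
  · rintro ⟨v, hr⟩
    refine ⟨Equiv.addRight v, ⟨v, trivial, fun x => rfl⟩, ?_⟩
    ext x
    simp [MulAut.conj_apply, Equiv.Perm.mul_apply, hr]

section Aux

variable {n : ℕ} (g : Equiv.Perm (V n))

lemma conjT_invol {r : Equiv.Perm (V n)} (hr : r ∈ conjSub (T n) g) (x : V n) :
    r (r x) = x := by
  obtain ⟨v, hv⟩ := (mem_conjT_iff g r).mp hr
  rw [hv, hv, (show ∀ (f : Equiv.Perm (V n)) (y : V n), f (f⁻¹ y) = y from fun f y => f.apply_symm_apply y)]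
  rw [add_assoc, char2_add_self', add_zero, (show ∀ (f : Equiv.Perm (V n)) (y : V n), f⁻¹ (f y) = y from fun f y => f.symm_apply_apply y)]

lemma conjT_comm {r s : Equiv.Perm (V n)} (hr : r ∈ conjSub (T n) g)
    (hs : s ∈ conjSub (T n) g) (x : V n) : r (s x) = s (r x) := by
  obtain ⟨v, hv⟩ := (mem_conjT_iff g r).mp hr
  obtain ⟨w, hw⟩ := (mem_conjT_iff g s).mp hs
  rw [hv, hw, hw, hv, (show ∀ (f : Equiv.Perm (V n)) (y : V n), f (f⁻¹ y) = y from fun f y => f.apply_symm_apply y), (show ∀ (f : Equiv.Perm (V n)) (y : V n), f (f⁻¹ y) = y from fun f y => f.apply_symm_apply y), add_assoc, add_assoc,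
    add_comm v w]

lemma conjT_unique {r s : Equiv.Perm (V n)} (hr : r ∈ conjSub (T n) g)
    (hs : s ∈ conjSub (T n) g) (h0 : r 0 = s 0) : r = s := by
  obtain ⟨v, hv⟩ := (mem_conjT_iff g r).mp hr
  obtain ⟨w, hw⟩ := (mem_conjT_iff g s).mp hs
  have : v = w := by
    have := h0
    rw [hv, hw] at this
    have := (g⁻¹ : Equiv.Perm (V n)).injective this
    exact add_left_cancel this
  ext x
  rw [hv, hw, this]

lemma conjT_exists (u : V n) : ∃ r, r ∈ conjSub (T n) g ∧ r 0 = u := by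
  refine ⟨g.trans ((Equiv.addRight (g u + g 0)).trans g.symm),
    (mem_conjT_iff g _).mpr ⟨g u + g 0, fun x => rfl⟩, ?_⟩
  show g.symm (g 0 + (g u + g 0)) = u
  have h : g 0 + (g u + g 0) = g u := by
    simp [add_assoc, add_comm, add_left_comm, char2_add_self', char2_cancel']
  rw [h, Equiv.symm_apply_apply]

end Aux

set_option maxHeartbeats 1000000 in
/-- If `σ_W = T ∩ T^g` with `dim W = n - 2`, then `T^g` is a proper subgroup of `AGL(V)`. -/
theorem conj_translationGroup_lt_AGL_of_second_maximal_intersection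
    (n : ℕ) (hn : 2 < n) (g : Equiv.Perm (V n))
    (W : Submodule (ZMod 2) (V n))
    (hW : sigmaSub n W = T n ⊓ conjSub (T n) g)
    (hdim : Module.finrank (ZMod 2) W = n - 2) :
    conjSub (T n) g < AGL n := by
  classical
  set R := conjSub (T n) g with hRdef
  -- translations by W are in R
  have hσW : ∀ w ∈ W, Equiv.addRight w ∈ R := by
    intro w hw
    have h : Equiv.addRight w ∈ sigmaSub n W := ⟨w, hw, fun x => rfl⟩
    rw [hW] at h
    exact h.2
  -- the canonical "translation-like" system τ : V → R
  choose τ hτR hτ0 using conjT_exists g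
  have hτuniq : ∀ (u : V n) (r : Equiv.Perm (V n)), r ∈ R → r 0 = u → r = τ u :=
    fun u r hr h0 => conjT_unique g hr (hτR u) (h0.trans (hτ0 u).symm)
  -- the obstruction function F
  set F : V n → V n → V n := fun u x => τ u x + x + u with hFdef
  have hτF : ∀ u x, τ u x = x + u + F u x := by
    intro u x
    show τ u x = x + u + (τ u x + x + u)
    simp [add_assoc, add_comm, add_left_comm, char2_add_self', char2_cancel']
  have hF0 : ∀ u, F u 0 = 0 := by
    intro u
    show τ u 0 + 0 + u = 0
    rw [hτ0]
    simp [char2_add_self']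
  have hFself : ∀ u, F u u = 0 := by
    intro u
    have h : τ u (τ u 0) = 0 := conjT_invol g (hτR u) 0
    rw [hτ0] at h
    show τ u u + u + u = 0
    rw [h]
    simp [add_assoc, char2_add_self']
  have hFsymm : ∀ u x, F u x = F x u := by
    intro u x
    have h : τ u (τ x 0) = τ x (τ u 0) := conjT_comm g (hτR u) (hτR x) 0
    rw [hτ0, hτ0] at h
    show τ u x + x + u = τ x u + u + x
    rw [h, add_assoc, add_assoc, add_comm x u]
  have hFWr : ∀ u x w, w ∈ W → F u (x + w) = F u x := by
    intro u x w hw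
    have h : τ u ((Equiv.addRight w) x) = (Equiv.addRight w) (τ u x) :=
      conjT_comm g (hτR u) (hσW w hw) x
    show τ u (x + w) + (x + w) + u = τ u x + x + u
    have h' : τ u (x + w) = τ u x + w := h
    rw [h']
    simp [add_assoc, add_comm, add_left_comm, char2_add_self', char2_cancel']
  have hFWl : ∀ u x w, w ∈ W → F (u + w) x = F u x := by
    intro u x w hw
    have hmem : (Equiv.addRight w) * τ u ∈ R := mul_mem (hσW w hw) (hτR u)
    have h0 : ((Equiv.addRight w) * τ u) 0 = u + w := by
      show τ u 0 + w = u + w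
      rw [hτ0]
    have heq : (Equiv.addRight w) * τ u = τ (u + w) := hτuniq (u + w) _ hmem h0
    show τ (u + w) x + x + (u + w) = τ u x + x + u
    rw [← heq]
    show τ u x + w + x + (u + w) = τ u x + x + u
    simp [add_assoc, add_comm, add_left_comm, char2_add_self', char2_cancel']
  -- F only depends on classes mod W
  set π := W.mkQ with hπdef
  have hπ : ∀ a b : V n, π a = π b → a + (a + b) = b ∧ a + b ∈ W := by
    intro a b hab
    refine ⟨char2_cancel' a b, ?_⟩
    have h := (Submodule.Quotient.eq W).mp hab
    have : a - b = a + b := by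
      rw [sub_eq_add_neg]
      congr 1
      rw [char2_eq_iff']
      simp [char2_add_self']
    rwa [this] at h
  have hFcoset : ∀ u u' x x', π u = π u' → π x = π x' → F u x = F u' x' := by
    intro u u' x x' hu hx
    obtain ⟨hu1, hu2⟩ := hπ u u' hu
    obtain ⟨hx1, hx2⟩ := hπ x x' hx
    calc F u x = F (u + (u + u')) (x + (x + x')) := by rw [hFWl _ _ _ hu2, hFWr _ _ _ hx2]
    _ = F u' x' := by rw [hu1, hx1]
  -- the key identity from involutivity
  have hdagger : ∀ u x, F u (x + u + F u x) = F u x := by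
    intro u x
    have h : τ u (τ u x) = x := conjT_invol g (hτR u) x
    rw [hτF u x, hτF u (x + u + F u x)] at h
    set y := x + u + F u x with hy
    have e1 : F u x = y + (x + u) := by
      rw [char2_eq_iff', hy]
      simp [add_assoc, add_comm, add_left_comm, char2_add_self', char2_cancel']
    have e2 : F u y = x + (y + u) := by
      rw [char2_eq_iff', ← h]
      simp [add_assoc, add_comm, add_left_comm, char2_add_self', char2_cancel']
    rw [e1, e2]
    abel
  -- quotient facts
  haveI : Fintype (V n ⧸ W) := Fintype.ofFinite _
  have hV : Module.finrank (ZMod 2) (V n) = n := by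
    simp [Module.finrank_pi]
  have hrank : Module.finrank (ZMod 2) (V n ⧸ W) = 2 := by
    have h := Submodule.finrank_quotient_add_finrank W
    rw [hdim, hV] at h
    omega
  have hcard : Fintype.card (V n ⧸ W) = 4 := by
    rw [Module.card_eq_pow_finrank (K := ZMod 2), hrank, ZMod.card]
    norm_num
  have hQmem : ∀ a b p : V n ⧸ W, a ≠ 0 → b ≠ 0 → a ≠ b →
      p = 0 ∨ p = a ∨ p = b ∨ p = a + b := by
    intro a b p ha hb hab
    have hab0 : a + b ≠ 0 := fun h => hab ((char2_eq_iff' a b).mpr h)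
    have haba : a + b ≠ a := fun h => hb (by
      have : a + b = a + 0 := by rw [h, add_zero]
      exact add_left_cancel this)
    have habb : a + b ≠ b := fun h => ha (by
      have : a + b = 0 + b := by rw [h, zero_add]
      exact add_right_cancel this)
    have h1 : (0 : V n ⧸ W) ∉ ({a, b, a + b} : Finset (V n ⧸ W)) := by
      simp [Ne.symm ha, Ne.symm hb, Ne.symm hab0]
    have h2 : a ∉ ({b, a + b} : Finset (V n ⧸ W)) := by
      simp [hab, Ne.symm haba]
    have h3 : b ∉ ({a + b} : Finset (V n ⧸ W)) := by
      simp [Ne.symm habb]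
    have huniv : ({0, a, b, a + b} : Finset (V n ⧸ W)) = Finset.univ := by
      apply Finset.eq_univ_of_card
      rw [Finset.card_insert_of_notMem h1, Finset.card_insert_of_notMem h2,
        Finset.card_insert_of_notMem h3, Finset.card_singleton, hcard]
    have hp := Finset.eq_univ_iff_forall.mp huniv p
    simpa using hp
  -- values of F with a zero argument
  have hFzr : ∀ u x, π x = 0 → F u x = 0 := by
    intro u x hx
    have h : π x = π 0 := by rw [hx, map_zero]
    rw [hFcoset u u x 0 rfl h, hF0]
  have hFzl : ∀ u x, π u = 0 → F u x = 0 := by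
    intro u x hu
    rw [hFsymm]
    exact hFzr x u hu
  -- the core case analysis
  have hCore : ∀ u x, π u ≠ 0 → π x ≠ 0 → π u ≠ π x → F u x = F u (u + x) := by
    intro u x hu hx hux
    rcases hQmem (π u) (π x) (π (F u x)) hu hx hux with hp | hp | hp | hp
    · refine (hdagger u x).symm.trans (hFcoset u u _ _ rfl ?_)
      rw [map_add, map_add, hp, add_zero, map_add, add_comm]
    · exfalso
      have hd := hdagger x u
      rw [hFsymm x u] at hd
      have hπx : π (u + x + F u x) = π x := by
        rw [map_add, map_add, hp]
        simp [add_assoc, add_comm, add_left_comm, char2_add_self', char2_cancel']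
      have h0 : F u x = 0 := by
        rw [← hd, hFcoset x x (u + x + F u x) x rfl hπx, hFself]
      rw [h0, map_zero] at hp
      exact hu hp.symm
    · exfalso
      have hπu : π (x + u + F u x) = π u := by
        rw [map_add, map_add, hp]
        simp [add_assoc, add_comm, add_left_comm, char2_add_self', char2_cancel']
      have h0 : F u x = 0 := by
        rw [← hdagger u x, hFcoset u u (x + u + F u x) u rfl hπu, hFself]
      rw [h0, map_zero] at hp
      exact hx hp.symm
    · exfalso
      have hπ0 : π (x + u + F u x) = π 0 := by
        rw [map_add, map_add, hp, map_zero]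
        simp [add_assoc, add_comm, add_left_comm, char2_add_self', char2_cancel']
      have h0 : F u x = 0 := by
        rw [← hdagger u x, hFcoset u u (x + u + F u x) 0 rfl hπ0, hF0]
      rw [h0, map_zero] at hp
      exact hux ((char2_eq_iff' (π u) (π x)).mpr hp.symm)
  -- additivity of F in the second argument
  have hAdd : ∀ u x y, F u (x + y) = F u x + F u y := by
    intro u x y
    by_cases hu : π u = 0
    · rw [hFzl u (x + y) hu, hFzl u x hu, hFzl u y hu, add_zero]
    by_cases hx : π x = 0
    · have h1 : F u (x + y) = F u y := by
        refine hFcoset u u _ _ rfl ?_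
        rw [map_add, hx, zero_add]
      rw [h1, hFzr u x hx, zero_add]
    by_cases hy : π y = 0
    · have h1 : F u (x + y) = F u x := by
        refine hFcoset u u _ _ rfl ?_
        rw [map_add, hy, add_zero]
      rw [h1, hFzr u y hy, add_zero]
    by_cases hxy : π x = π y
    · have h1 : F u x = F u y := hFcoset u u x y rfl hxy
      have h2 : F u (x + y) = 0 := by
        refine hFzr u _ ?_
        rw [map_add, hxy, char2_add_self']
      rw [h2, h1, char2_add_self']
    by_cases hux : π u = π x
    · have h1 : F u x = 0 := by
        rw [hFcoset u u x u rfl hux.symm, hFself]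
      have h2 : F u (x + y) = F u (u + y) := by
        refine hFcoset u u _ _ rfl ?_
        rw [map_add, map_add, hux]
      have h3 : F u y = F u (u + y) := hCore u y hu hy (by rw [hux]; exact hxy)
      rw [h1, h2, ← h3, zero_add]
    by_cases huy : π u = π y
    · have h1 : F u y = 0 := by
        rw [hFcoset u u y u rfl huy.symm, hFself]
      have h2 : F u (x + y) = F u (u + x) := by
        refine hFcoset u u _ _ rfl ?_
        rw [map_add, map_add, huy, add_comm]
      have h3 : F u x = F u (u + x) := hCore u x hu hx hux
      rw [h1, h2, ← h3, add_zero]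
    · -- all classes distinct and nonzero
      have hu' : π u = π x + π y := by
        rcases hQmem (π x) (π y) (π u) hx hy hxy with h | h | h | h
        · exact absurd h hu
        · exact absurd h hux
        · exact absurd h huy
        · exact h
      have h1 : F u (x + y) = 0 := by
        have h : π (x + y) = π u := by rw [map_add, hu']
        rw [hFcoset u u (x + y) u rfl h, hFself]
      have h2 : F u x = F u y := by
        rw [hCore u x hu hx hux]
        refine hFcoset u u _ _ rfl ?_
        rw [map_add, hu']
        simp [add_assoc, add_comm, add_left_comm, char2_add_self', char2_cancel']
      rw [h1, h2]
      exact (char2_add_self' _).symm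
  -- R is contained in AGL
  have hle : R ≤ AGL n := by
    intro r hr
    have hrτ : r = τ (r 0) := hτuniq (r 0) r hr rfl
    set v := r 0 with hv
    have hadd' : ∀ x y : V n,
        (x + y) + F v (x + y) = (x + F v x) + (y + F v y) := by
      intro x y
      rw [hAdd]
      abel
    let Ladd : V n →+ V n := AddMonoidHom.mk' (fun x => x + F v x) hadd'
    let Llin : V n →ₗ[ZMod 2] V n := AddMonoidHom.toZModLinearMap 2 Ladd
    have hfun : (Llin : V n → V n) = fun x => τ v x + v := by
      funext x
      show x + F v x = τ v x + v
      rw [hτF v x]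
      simp [add_assoc, add_comm, add_left_comm, char2_add_self', char2_cancel']
    have hbij : Function.Bijective (Llin : V n → V n) := by
      rw [hfun]
      exact ((τ v).trans (Equiv.addRight v)).bijective
    refine ⟨LinearEquiv.ofBijective Llin hbij, v, fun x => ?_⟩
    have hL : (LinearEquiv.ofBijective Llin hbij) x = x + F v x := rfl
    rw [hrτ, hτF v x, hL]
    abel
  -- strictness
  refine lt_of_le_of_ne hle ?_
  intro hEq
  have hnz : NeZero n := ⟨by omega⟩
  let i0 : Fin n := ⟨0, by omega⟩
  let i1 : Fin n := ⟨1, by omega⟩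
  have h10 : i1 ≠ i0 := by simp [i0, i1, Fin.ext_iff]
  let e : (V n) ≃ₗ[ZMod 2] V n := LinearEquiv.funCongrLeft (ZMod 2) (ZMod 2) (Equiv.swap i0 i1)
  have he : e.toEquiv ∈ AGL n := ⟨e, 0, fun x => by simp⟩
  have heR : e.toEquiv ∈ R := by rw [hEq]; exact he
  have h1 : e.toEquiv = τ 0 := hτuniq 0 e.toEquiv heR (by simp)
  have h2 : (1 : Equiv.Perm (V n)) = τ 0 := hτuniq 0 1 (one_mem R) rfl
  have h3 : e.toEquiv = 1 := h1.trans h2.symm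
  have hx : e.toEquiv (fun i => if i = i0 then (1 : ZMod 2) else 0) i1 = 1 := by
    have hstep : e.toEquiv (fun i => if i = i0 then (1 : ZMod 2) else 0) i1
        = (fun i => if i = i0 then (1 : ZMod 2) else 0) ((Equiv.swap i0 i1) i1) := rfl
    rw [hstep, Equiv.swap_apply_right]
    simp
  rw [h3] at hx
  simp [h10] at hx
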